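/- For the golden-ratio conjugate α = (√5 - 1)/2 and any ε > 0, there are only finitely many pairs of integers (p, q) with q ≥ 1 satisfying q·|q·α - p| < 1/√5 - ε. -/
import Mathlib

lemma aux_irr5 (p q : ℤ) (hq : (q:ℝ) ≠ 0) (h : Real.sqrt 5 * q = p) : False := by
  have hirr : Irrational (Real.sqrt 5) :=
    Nat.Prime.irrational_sqrt (by norm_num : Nat.Prime 5)
  have heq : Real.sqrt 5 = ((p / q : ℚ) : ℝ) := by
    push_cast
    field_simp
    linarith [h]
  exact (Rat.not_irrational _) (heq ▸ hirr)

set_option maxHeartbeats 1600000 in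
theorem stmt_1 (ε : ℝ) (hε : 0 < ε) :
    {pq : ℤ × ℤ | 1 ≤ pq.2 ∧
      (pq.2 : ℝ) * |(pq.2 : ℝ) * ((Real.sqrt 5 - 1) / 2) - pq.1| < 1 / Real.sqrt 5 - ε}.Finite := by
  have h5 : (0:ℝ) < 5 := by norm_num
  set s : ℝ := Real.sqrt 5 with hs
  have hs0 : 0 < s := Real.sqrt_pos.mpr h5
  have hs2 : s ^ 2 = 5 := Real.sq_sqrt (le_of_lt h5)
  have hs_lt3 : s < 3 := by nlinarith
  have hs_gt2 : 2 < s := by nlinarith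
  set B : ℝ := 1 / (5 * s * ε) with hB
  set Q : ℤ := ⌈B⌉ with hQ
  apply Set.Finite.subset ((Set.finite_Icc (-(Q+1)) (Q+1)).prod (Set.finite_Icc 1 Q))
  rintro ⟨p, q⟩ ⟨hq1, hlt⟩
  simp only [Set.mem_prod, Set.mem_Icc]
  have hq0 : (0:ℝ) < q := by exact_mod_cast hq1
  have hq1r : (1:ℝ) ≤ q := by exact_mod_cast hq1
  set d : ℝ := |(q:ℝ) * ((s - 1) / 2) - p| with hd
  have hd0 : 0 ≤ d := abs_nonneg _
  have hc0 : 0 ≤ (q:ℝ) * d := by positivity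
  have hεs : ε < 1 / s := by linarith
  have hdle : d ≤ (q:ℝ) * d := by nlinarith [hq1r, hd0]
  have hd_lt : d < 1 / s := by
    calc d ≤ (q:ℝ) * d := hdle
    _ < 1 / s - ε := hlt
    _ < 1 / s := by linarith
  -- the integer p^2 + p*q - q^2 is nonzero
  set N : ℤ := p ^ 2 + p * q - q ^ 2 with hN
  have hfac : (N : ℝ) = ((p:ℝ) - q * ((s - 1) / 2)) * ((p:ℝ) - q * (-(1 + s) / 2)) := by
    rw [hN]
    push_cast
    linear_combination ((q:ℝ)^2 / 4) * hs2
  have h1 : (p:ℝ) - q * ((s - 1) / 2) ≠ 0 := by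
    intro h
    apply aux_irr5 (2 * p + q) q (ne_of_gt hq0)
    push_cast
    linarith
  have h2 : (p:ℝ) - q * (-(1 + s) / 2) ≠ 0 := by
    intro h
    apply aux_irr5 (-(2 * p + q)) q (ne_of_gt hq0)
    push_cast
    linarith
  have hNr : (N:ℝ) ≠ 0 := by rw [hfac]; exact mul_ne_zero h1 h2
  have hN0 : N ≠ 0 := by exact_mod_cast hNr
  have hN1 : (1:ℝ) ≤ |(N:ℝ)| := by
    have h' : (1:ℤ) ≤ |N| := Int.one_le_abs hN0
    calc (1:ℝ) = ((1:ℤ):ℝ) := by norm_num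
    _ ≤ ((|N|:ℤ):ℝ) := by exact_mod_cast h'
    _ = |(N:ℝ)| := by push_cast; ring
  have habs1 : |(p:ℝ) - q * ((s - 1) / 2)| = d := by
    rw [hd, abs_sub_comm]
  have hb : |(p:ℝ) - q * (-(1 + s) / 2)| ≤ d + q * s := by
    have hrw : (p:ℝ) - q * (-(1 + s) / 2) = ((p:ℝ) - q * ((s - 1) / 2)) + q * s := by ring
    rw [hrw]
    calc |((p:ℝ) - q * ((s - 1) / 2)) + q * s| ≤ |(p:ℝ) - q * ((s - 1) / 2)| + |(q:ℝ) * s| :=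
      abs_add_le _ _
    _ = d + q * s := by rw [habs1, abs_of_pos (by positivity)]
  have hkey : 1 ≤ d ^ 2 + s * ((q:ℝ) * d) := by
    have hmul : |(N:ℝ)| = d * |(p:ℝ) - q * (-(1 + s) / 2)| := by
      rw [hfac, abs_mul, habs1]
    nlinarith [hmul, hN1, hb, hd0]
  -- derive the bound on q
  have hse : s * ε < d ^ 2 := by
    have hlt' : s * ((q:ℝ) * d) < s * (1 / s - ε) := mul_lt_mul_of_pos_left hlt hs0
    have heq1 : s * (1 / s - ε) = 1 - s * ε := by field_simp
    nlinarith
  have hq2d2 : (q:ℝ) ^ 2 * d ^ 2 < 1 / 5 := by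
    have h1' : (q:ℝ) * d < 1 / s - ε := hlt
    have h4' : ((q:ℝ) * d) ^ 2 < (1 / s - ε) ^ 2 :=
      pow_lt_pow_left₀ h1' hc0 (by norm_num)
    have h2' : (1 / s - ε) ^ 2 ≤ (1 / s) ^ 2 :=
      pow_le_pow_left₀ (by linarith) (by linarith) 2
    have h3' : (1 / s) ^ 2 = 1 / 5 := by rw [div_pow, one_pow, hs2]
    have h5' : (q:ℝ) ^ 2 * d ^ 2 = ((q:ℝ) * d) ^ 2 := by ring
    linarith
  have hq2 : (q:ℝ) ^ 2 * (s * ε) < 1 / 5 := by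
    have hqsq : (0:ℝ) < (q:ℝ) ^ 2 := by positivity
    have := mul_lt_mul_of_pos_left hse hqsq
    linarith
  have hqq : (q:ℝ) ≤ (q:ℝ) ^ 2 := by nlinarith [hq1r]
  have hqB : (q:ℝ) < B := by
    rw [hB, lt_div_iff₀ (by positivity : (0:ℝ) < 5 * s * ε)]
    have hA : (q:ℝ) * (5 * s * ε) ≤ (q:ℝ) ^ 2 * (5 * s * ε) :=
      mul_le_mul_of_nonneg_right hqq (by positivity)
    have hBB : (q:ℝ) ^ 2 * (5 * s * ε) = 5 * ((q:ℝ) ^ 2 * (s * ε)) := by ring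
    linarith
  have hqQ : q ≤ Q := le_of_lt (Int.lt_ceil.mpr hqB)
  have hqQr : (q:ℝ) ≤ (Q:ℝ) := by exact_mod_cast hqQ
  -- bound on p
  have hd1 : |(q:ℝ) * ((s - 1) / 2) - p| < 1 := by
    calc |(q:ℝ) * ((s - 1) / 2) - p| = d := by rw [hd]
    _ < 1 / s := hd_lt
    _ < 1 := by rw [div_lt_one hs0]; linarith
  have habslt := abs_lt.mp hd1
  have hα1 : (q:ℝ) * ((s - 1) / 2) < q := by nlinarith [hq0]
  have hα0 : 0 < (q:ℝ) * ((s - 1) / 2) := mul_pos hq0 (by linarith)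
  have hp_up : (p:ℝ) ≤ (Q:ℝ) + 1 := by linarith [habslt.1]
  have hp_lo : -((Q:ℝ) + 1) ≤ (p:ℝ) := by linarith [habslt.2]
  refine ⟨⟨?_, ?_⟩, hq1, hqQ⟩
  · exact_mod_cast hp_lo
  · exact_mod_cast hp_up
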